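/- Every graph with two edge-disjoint spanning trees has a spanning connected subgraph in which every vertex has even positive degree (a spanning Eulerian subgraph). -/

import Mathlib

open Classical Finset

namespace JaegerAux

variable {V : Type*} [DecidableEq V]

/-- Number of edges in `E` incident to `v`. -/
def deg2 (E : Finset (Sym2 V)) (v : V) : ℕ :=
  (E.filter (fun e => v ∈ e)).card

lemma filter_symmDiff' (p : Sym2 V → Prop) [DecidablePred p] (s t : Finset (Sym2 V)) :
    (symmDiff s t).filter p = symmDiff (s.filter p) (t.filter p) := by
  ext e
  simp only [Finset.mem_filter, Finset.mem_symmDiff]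
  tauto

lemma card_symmDiff_modeq (s t : Finset (Sym2 V)) :
    (symmDiff s t).card ≡ s.card + t.card [MOD 2] := by
  have h1 : symmDiff s t = (s \ t) ∪ (t \ s) := by rw [symmDiff_def]; rfl
  have hd : Disjoint (s \ t) (t \ s) := disjoint_sdiff_sdiff
  have h2 : (symmDiff s t).card = (s \ t).card + (t \ s).card := by
    rw [h1, Finset.card_union_of_disjoint hd]
  have h3 := Finset.card_sdiff_add_card_inter s t
  have h4 := Finset.card_sdiff_add_card_inter t s
  have h5 : (s ∩ t).card = (t ∩ s).card := by rw [Finset.inter_comm]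
  unfold Nat.ModEq
  omega

lemma deg2_symmDiff (s t : Finset (Sym2 V)) (v : V) :
    deg2 (symmDiff s t) v ≡ deg2 s v + deg2 t v [MOD 2] := by
  unfold deg2
  rw [filter_symmDiff']
  exact card_symmDiff_modeq _ _

lemma deg2_singleton (a c v : V) (hac : a ≠ c) :
    deg2 ({s(a, c)} : Finset (Sym2 V)) v
      = (if v = a then 1 else 0) + (if v = c then 1 else 0) := by
  unfold deg2
  rw [Finset.filter_singleton]
  by_cases ha : v = a <;> by_cases hc : v = c <;>
    simp_all [Sym2.mem_iff]

variable {A : SimpleGraph V}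

/-- The mod-2 edge set of a walk (symmetric difference of its edges). -/
def walkEdges : ∀ {a b : V}, A.Walk a b → Finset (Sym2 V)
  | _, _, SimpleGraph.Walk.nil => ∅
  | _, _, SimpleGraph.Walk.cons (u := a) (v := c) _ p =>
      symmDiff ({s(a, c)} : Finset (Sym2 V)) (walkEdges p)

lemma walkEdges_subset : ∀ {a b : V} (p : A.Walk a b), ∀ e ∈ walkEdges p, e ∈ A.edgeSet
  | _, _, SimpleGraph.Walk.nil => by simp [walkEdges]
  | _, _, SimpleGraph.Walk.cons (u := a) (v := c) h p => by
      intro e he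
      rw [walkEdges, Finset.mem_symmDiff] at he
      rcases he with ⟨he, -⟩ | ⟨he, -⟩
      · rw [Finset.mem_singleton] at he
        subst he
        exact h
      · exact walkEdges_subset p e he

lemma walkEdges_deg2 : ∀ {a b : V} (p : A.Walk a b) (v : V),
    deg2 (walkEdges p) v ≡ (if v = a then 1 else 0) + (if v = b then 1 else 0) [MOD 2]
  | a, _, SimpleGraph.Walk.nil, v => by
      simp only [walkEdges]
      unfold deg2
      simp only [Finset.filter_empty, Finset.card_empty]
      by_cases h : v = a <;> simp [h, Nat.ModEq]
  | _, b, SimpleGraph.Walk.cons (u := a) (v := c) h p, v => by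
      have hac : a ≠ c := A.ne_of_adj h
      have h1 := deg2_symmDiff ({s(a, c)} : Finset (Sym2 V)) (walkEdges p) v
      have h2 := walkEdges_deg2 p v
      rw [walkEdges]
      refine h1.trans ?_
      rw [deg2_singleton a c v hac]
      have h3 : ((if v = a then 1 else 0) + (if v = c then 1 else 0)) + deg2 (walkEdges p) v
          ≡ ((if v = a then 1 else 0) + (if v = c then 1 else 0))
            + ((if v = c then 1 else 0) + (if v = b then 1 else 0)) [MOD 2] :=
        Nat.ModEq.add_left _ h2
      refine h3.trans ?_
      unfold Nat.ModEq
      by_cases hc : v = c <;> simp [hc] <;> omega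

noncomputable instance : Std.Commutative (α := Finset (Sym2 V)) symmDiff := ⟨symmDiff_comm⟩
noncomputable instance : Std.Associative (α := Finset (Sym2 V)) symmDiff := ⟨symmDiff_assoc⟩

/-- Fold of symmetric differences. -/
noncomputable def xorFold (S : Finset V) (f : V → Finset (Sym2 V)) : Finset (Sym2 V) :=
  S.fold symmDiff ∅ f

lemma xorFold_subset (S : Finset V) (f : V → Finset (Sym2 V)) (E : Set (Sym2 V))
    (hf : ∀ a ∈ S, ∀ e ∈ f a, e ∈ E) : ∀ e ∈ xorFold S f, e ∈ E := by
  classical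
  induction S using Finset.induction_on with
  | empty => simp [xorFold]
  | insert a s ha ih =>
      intro e he
      rw [xorFold, Finset.fold_insert ha, Finset.mem_symmDiff] at he
      rcases he with ⟨he, -⟩ | ⟨he, -⟩
      · exact hf a (Finset.mem_insert_self a s) e he
      · exact ih (fun x hx => hf x (Finset.mem_insert_of_mem hx)) e he

lemma xorFold_deg2 (S : Finset V) (f : V → Finset (Sym2 V)) (v : V) :
    deg2 (xorFold S f) v ≡ ∑ a ∈ S, deg2 (f a) v [MOD 2] := by
  classical
  induction S using Finset.induction_on with
  | empty =>
      simp only [xorFold, Finset.fold_empty, Finset.sum_empty]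
      simp only [deg2, Finset.filter_empty, Finset.card_empty]
      rfl
  | insert a s ha ih =>
      rw [xorFold, Finset.fold_insert ha, Finset.sum_insert ha]
      exact (deg2_symmDiff _ _ v).trans (Nat.ModEq.add_left _ ih)

end JaegerAux

open JaegerAux in
/-- Jaeger: every graph with two edge-disjoint spanning trees has a
spanning Eulerian subgraph: a connected spanning subgraph with all degrees even
(and positive whenever the graph has at least two vertices). -/
theorem spanning_eulerian_of_two_trees {V : Type*} [Fintype V] (G : SimpleGraph V)
    (T₁ T₂ : SimpleGraph V) (h₁ : T₁ ≤ G) (h₂ : T₂ ≤ G)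
    (ht₁ : T₁.IsTree) (ht₂ : T₂.IsTree) (hdisj : Disjoint T₁.edgeSet T₂.edgeSet) :
    ∃ H : SimpleGraph V, H ≤ G ∧ H.Connected ∧ (∀ v, Even (H.degree v)) ∧
      (2 ≤ Fintype.card V → ∀ v, 0 < H.degree v) := by
  classical
  obtain ⟨r⟩ : Nonempty V := ht₂.isConnected.nonempty
  -- the odd-degree vertices of T₁
  set S : Finset V := Finset.univ.filter (fun v => Odd (T₁.degree v)) with hS
  -- a walk in T₂ from each vertex to the root
  have reach : ∀ v : V, T₂.Reachable v r := fun v => ht₂.isConnected.preconnected v r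
  let p : ∀ v : V, T₂.Walk v r := fun v => (reach v).some
  -- the T-join
  let F : Finset (Sym2 V) := xorFold S (fun v => walkEdges (p v))
  have hFsub : ∀ e ∈ F, e ∈ T₂.edgeSet :=
    xorFold_subset S _ T₂.edgeSet (fun a _ => walkEdges_subset (p a))
  set K : SimpleGraph V := SimpleGraph.fromEdgeSet (↑F) with hKdef
  have hK : K ≤ T₂ := by
    have : (↑F : Set (Sym2 V)) ⊆ T₂.edgeSet := fun e he => hFsub e he
    calc K ≤ SimpleGraph.fromEdgeSet T₂.edgeSet := SimpleGraph.fromEdgeSet_mono this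
    _ = T₂ := SimpleGraph.fromEdgeSet_edgeSet T₂
  letI : DecidableRel T₁.Adj := Classical.decRel _
  letI : DecidableRel K.Adj := Classical.decRel _
  letI : DecidableRel (T₁ ⊔ K).Adj := Classical.decRel _
  -- degree of K equals incidence count of F
  have hdegK : ∀ v, K.degree v = deg2 F v := by
    intro v
    rw [← SimpleGraph.card_neighborFinset_eq_degree]
    unfold deg2
    apply Finset.card_nbij (fun w => s(v, w))
    · intro w hw
      rw [Finset.mem_coe, SimpleGraph.mem_neighborFinset, hKdef] at hw
      rw [Finset.mem_coe, Finset.mem_filter]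
      rw [SimpleGraph.fromEdgeSet_adj] at hw
      exact ⟨hw.1, Sym2.mem_mk_left v w⟩
    · intro w hw w' hw' hww'
      exact Sym2.congr_right.mp hww'
    · intro e he
      simp only [Finset.coe_filter, Set.mem_setOf_eq] at he
      obtain ⟨heF, hve⟩ := he
      refine ⟨Sym2.Mem.other hve, ?_, Sym2.other_spec hve⟩
      rw [Finset.mem_coe, SimpleGraph.mem_neighborFinset, hKdef,
        SimpleGraph.fromEdgeSet_adj]
      have hne : ¬(e : Sym2 V).IsDiag := T₂.not_isDiag_of_mem_edgeSet (hFsub e heF)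
      refine ⟨by rw [Sym2.other_spec hve]; exact heF, ?_⟩
      intro hvv
      apply hne
      rw [← Sym2.other_spec hve, ← hvv]
      exact Sym2.mk_isDiag_iff.mpr rfl
  have hdisjadj : ∀ v w, T₁.Adj v w → ¬ K.Adj v w := by
    intro v w hT hKvw
    have h2' : T₂.Adj v w := hK hKvw
    have hmem : s(v, w) ∈ T₁.edgeSet ∩ T₂.edgeSet := ⟨hT, h2'⟩
    rw [Set.disjoint_iff_inter_eq_empty] at hdisj
    rw [hdisj] at hmem
    exact hmem
  have hdeg : ∀ v, (T₁ ⊔ K).degree v = T₁.degree v + K.degree v := by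
    intro v
    rw [← SimpleGraph.card_neighborFinset_eq_degree,
      ← SimpleGraph.card_neighborFinset_eq_degree,
      ← SimpleGraph.card_neighborFinset_eq_degree]
    have hu : (T₁ ⊔ K).neighborFinset v = T₁.neighborFinset v ∪ K.neighborFinset v := by
      ext w
      simp [SimpleGraph.mem_neighborFinset, SimpleGraph.sup_adj]
    rw [hu]
    apply Finset.card_union_of_disjoint
    rw [Finset.disjoint_left]
    intro w hw1 hw2
    rw [SimpleGraph.mem_neighborFinset] at hw1 hw2
    exact hdisjadj v w hw1 hw2
  -- parity of deg2 F v
  have hScard : Even S.card := by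
    have := T₁.even_card_odd_degree_vertices
    convert this using 3
  have hpar : ∀ v, deg2 F v % 2 = (if Odd (T₁.degree v) then 1 else 0) % 2 := by
    intro v
    have h1 := xorFold_deg2 S (fun v => walkEdges (p v)) v
    have h2 : (∑ a ∈ S, deg2 (walkEdges (p a)) v) % 2
        = (∑ a ∈ S, ((if v = a then 1 else 0) + (if v = r then 1 else 0))) % 2 := by
      rw [Finset.sum_nat_mod, Finset.sum_nat_mod _ 2
        (fun a => (if v = a then 1 else 0) + (if v = r then 1 else 0))]
      congr 1
      apply Finset.sum_congr rfl
      intro a _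
      exact walkEdges_deg2 (p a) v
    have h3 : (∑ a ∈ S, ((if v = a then 1 else 0) + (if v = r then 1 else 0)))
        = (if v ∈ S then 1 else 0) + S.card * (if v = r then 1 else 0) := by
      rw [Finset.sum_add_distrib, Finset.sum_ite_eq S v (fun _ => 1),
        Finset.sum_const, smul_eq_mul]
    have h4 : (v ∈ S) ↔ Odd (T₁.degree v) := by
      rw [hS, Finset.mem_filter]
      simp
    have hSc : S.card % 2 = 0 := Nat.even_iff.mp hScard
    have h1' := h1
    unfold Nat.ModEq at h1'
    have hvS : (if v ∈ S then (1:ℕ) else 0) = (if Odd (T₁.degree v) then 1 else 0) := by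
      simp only [h4]
    rw [h1', h2, h3, hvS]
    by_cases hr : v = r <;> simp [hr] <;> omega
  refine ⟨T₁ ⊔ K, sup_le h₁ (hK.trans h₂), ht₁.isConnected.mono le_sup_left, ?_, ?_⟩
  · -- all degrees even
    intro v
    rw [hdeg v, hdegK v]
    have := hpar v
    rw [Nat.even_add]
    by_cases hv : Odd (T₁.degree v)
    · simp only [hv, if_true] at this
      constructor
      · intro he; exact absurd hv (Nat.not_odd_iff_even.mpr he)
      · intro he
        exfalso
        rw [Nat.even_iff] at he
        omega
    · simp only [hv, if_false] at this
      have hv' : Even (T₁.degree v) := Nat.not_odd_iff_even.mp hv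
      rw [Nat.even_iff, Nat.even_iff] at *
      omega
  · -- positivity
    intro hcard v
    rw [hdeg v]
    have : 0 < T₁.degree v := by
      rw [SimpleGraph.degree_pos_iff_exists_adj]
      obtain ⟨w, hw⟩ := Fintype.exists_ne_of_one_lt_card (by omega) v
      have hwalk : T₁.Reachable v w := ht₁.isConnected.preconnected v w
      obtain ⟨q⟩ := hwalk
      cases q with
      | nil => exact absurd rfl (Ne.symm hw)
      | cons h q => exact ⟨_, h⟩
    omega
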